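/- Let a > 0, b ≥ 0, c > 0, u₀ ∈ ℝ, and let u be an axisymmetric stationary rotating profile on [0, c] with u(0) = u₀, i.e. u is differentiable on [0, c] and u'(r)/√(1 + u'(r)²) = r(a r² + 2b)/4 for all r ∈ [0, c]. Then for every r ∈ (0, c], u(r) − u₀ ≤ (4 − √(16 − r²(a r² + 2b)²)) / (a r² + 2b); and if moreover b > 0, then also (2 − √(4 − b² r²)) / b ≤ u(r) − u₀ for every r ∈ (0, c]. -/

import Mathlib

open Set

lemma phi_strictMono : StrictMono (fun x : ℝ => x / Real.sqrt (1 + x ^ 2)) := by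
  have : (fun x : ℝ => x / Real.sqrt (1 + x ^ 2)) = fun x => Real.sin (Real.arctan x) := by
    funext x; rw [Real.sin_arctan]
  rw [this]
  intro x y hxy
  exact Real.strictMonoOn_sin
    ⟨(Real.neg_pi_div_two_lt_arctan x).le, (Real.arctan_lt_pi_div_two x).le⟩
    ⟨(Real.neg_pi_div_two_lt_arctan y).le, (Real.arctan_lt_pi_div_two y).le⟩
    (Real.arctan_strictMono hxy)

lemma phi_lt_one (x : ℝ) : x / Real.sqrt (1 + x ^ 2) < 1 := by
  have h1 : (0:ℝ) < Real.sqrt (1 + x ^ 2) := Real.sqrt_pos.2 (by positivity)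
  rw [div_lt_one h1]
  calc x ≤ |x| := le_abs_self x
    _ = Real.sqrt (x ^ 2) := (Real.sqrt_sq_eq_abs x).symm
    _ < Real.sqrt (1 + x ^ 2) := Real.sqrt_lt_sqrt (sq_nonneg x) (by linarith)

lemma phi_inv {t : ℝ} (h : t ^ 2 < 1) :
    (t / Real.sqrt (1 - t ^ 2)) / Real.sqrt (1 + (t / Real.sqrt (1 - t ^ 2)) ^ 2) = t := by
  set s := Real.sqrt (1 - t ^ 2) with hs
  have hs0 : 0 < s := Real.sqrt_pos.2 (by linarith)
  have hs2 : s ^ 2 = 1 - t ^ 2 := Real.sq_sqrt (by linarith)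
  have h1 : 1 + (t / s) ^ 2 = (1 / s) ^ 2 := by
    field_simp
    nlinarith [hs2]
  rw [h1, Real.sqrt_sq (by positivity)]
  field_simp

lemma mono_aux {r : ℝ} (hr : 0 < r) {f g f' g' : ℝ → ℝ}
    (hf : ∀ x ∈ Icc (0:ℝ) r, HasDerivAt f (f' x) x)
    (hg : ∀ x ∈ Icc (0:ℝ) r, HasDerivAt g (g' x) x)
    (hle : ∀ x ∈ Icc (0:ℝ) r, f' x ≤ g' x) :
    f r - f 0 ≤ g r - g 0 := by
  have hmem : ∀ x ∈ Ioo (0:ℝ) r, x ∈ Icc (0:ℝ) r := fun x hx => Ioo_subset_Icc_self hx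
  have hmono : MonotoneOn (fun x => g x - f x) (Icc (0:ℝ) r) := by
    apply monotoneOn_of_deriv_nonneg (convex_Icc 0 r)
    · exact fun x hx => ((hg x hx).sub (hf x hx)).continuousAt.continuousWithinAt
    · rw [interior_Icc]
      exact fun x hx => ((hg x (hmem x hx)).sub (hf x (hmem x hx))).differentiableAt.differentiableWithinAt
    · rw [interior_Icc]
      intro x hx
      rw [((hg x (hmem x hx)).fun_sub (hf x (hmem x hx))).deriv]
      linarith [hle x (hmem x hx)]
  have := hmono (left_mem_Icc.2 hr.le) (right_mem_Icc.2 hr.le) hr.le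
  simp only at this
  linarith

lemma sqrtF_deriv {m s : ℝ} (hm : 0 < m) (h : (m * s) ^ 2 < 1) :
    HasDerivAt (fun x : ℝ => -(Real.sqrt (1 - (m * x) ^ 2)) / m)
      (m * s / Real.sqrt (1 - (m * s) ^ 2)) s := by
  have hpos : 0 < 1 - (m * s) ^ 2 := by linarith
  have hs0 : 0 < Real.sqrt (1 - (m * s) ^ 2) := Real.sqrt_pos.2 hpos
  have hinner : HasDerivAt (fun x : ℝ => 1 - (m * x) ^ 2) (-(2 * m ^ 2 * s)) s := by
    have h1 := (((hasDerivAt_id s).const_mul m).fun_pow 2).const_sub 1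
    convert h1 using 1 <;> first | rfl | (simp; ring)
  have h2 := (hinner.sqrt hpos.ne').fun_neg.div_const m
  convert h2 using 1 <;> first | rfl | (field_simp; ring) | field_simp

/-- Theorem (height estimates for axisymmetric profiles of type I):
`u(r) - u₀ ≤ (4 - √(16 - r²(ar²+2b)²))/(ar²+2b)` for `0 < r ≤ c`, and if `b > 0`
also `(2 - √(4 - b²r²))/b ≤ u(r) - u₀`. -/
theorem stmt_6 (a b c u₀ : ℝ) (ha : 0 < a) (hb : 0 ≤ b) (hc : 0 < c)
    (u u' : ℝ → ℝ)
    (hu : ∀ r ∈ Icc (0:ℝ) c, HasDerivAt u (u' r) r)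
    (heq : ∀ r ∈ Icc (0:ℝ) c, u' r / Real.sqrt (1 + u' r ^ 2) = r * (a * r ^ 2 + 2 * b) / 4)
    (h0 : u 0 = u₀) :
    (∀ r, 0 < r → r ≤ c →
        u r - u₀ ≤ (4 - Real.sqrt (16 - r ^ 2 * (a * r ^ 2 + 2 * b) ^ 2)) / (a * r ^ 2 + 2 * b)) ∧
      (0 < b → ∀ r, 0 < r → r ≤ c →
        (2 - Real.sqrt (4 - b ^ 2 * r ^ 2)) / b ≤ u r - u₀) := by
  have hphi_lt : ∀ x : ℝ, x / Real.sqrt (1 + x ^ 2) < 1 := phi_lt_one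
  constructor
  · -- upper bound
    intro r hr hrc
    set k := (a * r ^ 2 + 2 * b) / 4 with hk
    have hk0 : 0 < k := by rw [hk]; positivity
    have hsub : Icc (0:ℝ) r ⊆ Icc (0:ℝ) c := Icc_subset_Icc le_rfl hrc
    have hkr : k * r < 1 := by
      have he := heq r ⟨hr.le, hrc⟩
      have h1 := phi_lt_one (u' r)
      rw [he] at h1
      calc k * r = r * (a * r ^ 2 + 2 * b) / 4 := by rw [hk]; ring
        _ < 1 := h1
    have hsq : ∀ s ∈ Icc (0:ℝ) r, (k * s) ^ 2 < 1 := by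
      intro s hs
      have hx0 : 0 ≤ k * s := mul_nonneg hk0.le hs.1
      have hxy : k * s ≤ k * r := mul_le_mul_of_nonneg_left hs.2 hk0.le
      nlinarith [hkr, hx0, hxy]
    have hub : ∀ s ∈ Icc (0:ℝ) r, u' s ≤ k * s / Real.sqrt (1 - (k * s) ^ 2) := by
      intro s hs
      have hφ := phi_inv (hsq s hs)
      have he := heq s (hsub hs)
      have hmono := phi_strictMono.le_iff_le
        (a := u' s) (b := k * s / Real.sqrt (1 - (k * s) ^ 2))
      apply hmono.1
      rw [he, hφ, hk]
      nlinarith [mul_nonneg (mul_nonneg ha.le hs.1)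
        (sub_nonneg.2 (mul_self_le_mul_self hs.1 hs.2))]
    have hF : ∀ s ∈ Icc (0:ℝ) r,
        HasDerivAt (fun x => -(Real.sqrt (1 - (k * x) ^ 2)) / k)
          (k * s / Real.sqrt (1 - (k * s) ^ 2)) s :=
      fun s hs => sqrtF_deriv hk0 (hsq s hs)
    have key := mono_aux hr (fun s hs => hu s (hsub hs)) hF hub
    norm_num [Real.sqrt_one] at key
    rw [h0] at key
    have h16 : Real.sqrt (16 - r ^ 2 * (a * r ^ 2 + 2 * b) ^ 2) = 4 * Real.sqrt (1 - (k * r) ^ 2) := by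
      have he : 16 - r ^ 2 * (a * r ^ 2 + 2 * b) ^ 2 = 4 ^ 2 * (1 - (k * r) ^ 2) := by
        rw [hk]; ring
      rw [he, Real.sqrt_mul (by norm_num), Real.sqrt_sq (by norm_num)]
    have hab : a * r ^ 2 + 2 * b = 4 * k := by rw [hk]; ring
    rw [h16, hab]
    have heq2 : (4 - 4 * Real.sqrt (1 - (k * r) ^ 2)) / (4 * k)
        = -(Real.sqrt (1 - (k * r) ^ 2)) / k - -1 / k := by
      field_simp
      ring
    rw [heq2]
    linarith [key]
  · -- lower bound
    intro hbpos r hr hrc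
    set m := b / 2 with hm
    have hm0 : 0 < m := by rw [hm]; positivity
    have hsub : Icc (0:ℝ) r ⊆ Icc (0:ℝ) c := Icc_subset_Icc le_rfl hrc
    have hmr : m * r < 1 := by
      have he := heq r ⟨hr.le, hrc⟩
      have h1 := phi_lt_one (u' r)
      rw [he] at h1
      have h2 : b / 2 * r ≤ r * (a * r ^ 2 + 2 * b) / 4 := by
        nlinarith [mul_nonneg (mul_nonneg ha.le hr.le) (sq_nonneg r)]
      rw [hm]; linarith
    have hsq : ∀ s ∈ Icc (0:ℝ) r, (m * s) ^ 2 < 1 := by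
      intro s hs
      have hx0 : 0 ≤ m * s := mul_nonneg hm0.le hs.1
      have hxy : m * s ≤ m * r := mul_le_mul_of_nonneg_left hs.2 hm0.le
      nlinarith [hmr, hx0, hxy]
    have hlb : ∀ s ∈ Icc (0:ℝ) r, m * s / Real.sqrt (1 - (m * s) ^ 2) ≤ u' s := by
      intro s hs
      have hφ := phi_inv (hsq s hs)
      have he := heq s (hsub hs)
      have hmono := phi_strictMono.le_iff_le
        (a := m * s / Real.sqrt (1 - (m * s) ^ 2)) (b := u' s)
      apply hmono.1
      rw [he, hφ, hm]
      nlinarith [mul_nonneg (mul_nonneg ha.le hs.1) (mul_nonneg hs.1 hs.1)]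
    have hF : ∀ s ∈ Icc (0:ℝ) r,
        HasDerivAt (fun x => -(Real.sqrt (1 - (m * x) ^ 2)) / m)
          (m * s / Real.sqrt (1 - (m * s) ^ 2)) s :=
      fun s hs => sqrtF_deriv hm0 (hsq s hs)
    have key := mono_aux hr hF (fun s hs => hu s (hsub hs)) hlb
    norm_num [Real.sqrt_one] at key
    rw [h0] at key
    have h4 : Real.sqrt (4 - b ^ 2 * r ^ 2) = 2 * Real.sqrt (1 - (m * r) ^ 2) := by
      have he : 4 - b ^ 2 * r ^ 2 = 2 ^ 2 * (1 - (m * r) ^ 2) := by rw [hm]; ring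
      rw [he, Real.sqrt_mul (by norm_num), Real.sqrt_sq (by norm_num)]
    rw [h4]
    have heq2 : (2 - 2 * Real.sqrt (1 - (m * r) ^ 2)) / b
        = -(Real.sqrt (1 - (m * r) ^ 2)) / m - -1 / m := by
      rw [hm]
      field_simp
      ring
    rw [heq2]
    linarith [key]
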